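/- Fix p ∈ (0, 1/2) and an integer Δ ≥ 1, and set α = (1 + (1 − 4p(1−p))^Δ)/2 and c = H_b(p)/log₂(1/α). For each n let X ∈ 𝔽₂ⁿ have i.i.d. coordinates with P(Xᵢ = 1) = p, and let Q be a random m(n) × n matrix over 𝔽₂ whose m(n) rows are i.i.d. and uniformly distributed over the set of vectors in 𝔽₂ⁿ of Hamming weight exactly Δ, independent of X, where m : ℕ → ℕ satisfies m(n)/n → c. Then for every sequence of decoding functions D_n (taking as input the realized matrix Q and the query answers QX ∈ 𝔽₂^{m(n)} and outputting a vector in 𝔽₂ⁿ), liminf_{n→∞} P(D_n(Q, QX) ≠ X) ≥ p · exp(−Δ·c) > 0; in particular, the average probability of error of this random query ensemble does not vanish as n → ∞. -/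

import Mathlib

open scoped Classical

/-- Binary entropy function (base 2). -/
noncomputable def Hb (p : ℝ) : ℝ := -(p * Real.logb 2 p) - (1 - p) * Real.logb 2 (1 - p)

/-- Probability of a vector of `n` i.i.d. `Ber(p)` labels over `𝔽₂`. -/
noncomputable def vecProb (p : ℝ) {n : ℕ} (x : Fin n → ZMod 2) : ℝ :=
  p ^ (hammingNorm x) * (1 - p) ^ (n - hammingNorm x)

/-- Probability of a single query row: uniform over vectors of Hamming weight exactly `Δ`. -/
noncomputable def rowProb (n Δ : ℕ) (v : Fin n → ZMod 2) : ℝ :=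
  if hammingNorm v = Δ then 1 / (n.choose Δ : ℝ) else 0

lemma vecProb_eq_prod (p : ℝ) {n : ℕ} (x : Fin n → ZMod 2) :
    vecProb p x = ∏ k, (if x k = 0 then 1 - p else p) := by
  classical
  rw [Finset.prod_ite, Finset.prod_const, Finset.prod_const, vecProb]
  have h0 : (Finset.univ.filter fun k => ¬ x k = 0).card = hammingNorm x := by
    simp [hammingNorm]
  have h1 : (Finset.univ.filter fun k => x k = 0).card
      + (Finset.univ.filter fun k => ¬ x k = 0).card = n := by
    rw [Finset.card_filter_add_card_filter_not]; simp
  have h2 : (Finset.univ.filter fun k => x k = 0).card = n - hammingNorm x := by omega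
  rw [h0, h2, mul_comm]

lemma zmod2_sum (g : ZMod 2 → ℝ) : ∑ t, g t = g 0 + g 1 := by
  rw [show (Finset.univ : Finset (ZMod 2)) = {0, 1} from by decide]
  rw [Finset.sum_insert (by decide), Finset.sum_singleton]

lemma vecProb_nonneg {p : ℝ} (hp0 : 0 ≤ p) (hp1 : p ≤ 1) {n : ℕ} (x : Fin n → ZMod 2) :
    0 ≤ vecProb p x := by
  rw [vecProb_eq_prod]
  exact Finset.prod_nonneg fun k _ => by split <;> linarith

lemma sum_vecProb (p : ℝ) (n : ℕ) : ∑ x : Fin n → ZMod 2, vecProb p x = 1 := by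
  classical
  calc ∑ x : Fin n → ZMod 2, vecProb p x
      = ∑ x : Fin n → ZMod 2, ∏ k, (if x k = 0 then 1 - p else p) :=
        Finset.sum_congr rfl fun x _ => vecProb_eq_prod p x
    _ = (∑ t : ZMod 2, if t = 0 then 1 - p else p) ^ n := by rw [Fintype.sum_pow]
    _ = 1 := by
        rw [zmod2_sum]
        norm_num [show (1 : ZMod 2) ≠ 0 from by decide]

lemma card_wt (n Δ : ℕ) (s : Finset (Fin n)) :
    (Finset.univ.filter fun v : Fin n → ZMod 2 =>
        hammingNorm v = Δ ∧ ∀ j ∉ s, v j = 0).card = s.card.choose Δ := by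
  classical
  rw [← Finset.card_powersetCard]
  apply Finset.card_nbij' (i := fun v => Finset.univ.filter fun k => v k ≠ 0)
      (j := fun t k => if k ∈ t then 1 else 0)
  · intro v hv
    simp only [Finset.mem_coe, Finset.mem_filter, Finset.mem_univ, true_and] at hv
    rw [Finset.mem_coe, Finset.mem_powersetCard]
    constructor
    · intro k hk
      simp only [Finset.mem_filter, Finset.mem_univ, true_and] at hk
      by_contra hks
      exact hk (hv.2 k hks)
    · simpa [hammingNorm] using hv.1
  · intro t ht
    rw [Finset.mem_coe, Finset.mem_powersetCard] at ht
    simp only [Finset.mem_coe, Finset.mem_filter, Finset.mem_univ, true_and]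
    constructor
    · rw [← ht.2]
      simp only [hammingNorm]
      congr 1
      ext k
      by_cases hk : k ∈ t <;> simp [hk]
    · intro j hj
      have : j ∉ t := fun h => hj (ht.1 h)
      simp [this]
  · intro v hv
    funext k
    by_cases hk : v k = 0 <;> simp only [Finset.mem_filter, Finset.mem_univ, true_and]
    · simp [hk]
    · simp only [hk, if_pos, ne_eq, not_false_iff, if_true]
      have : v k = 0 ∨ v k = 1 := by revert hk; generalize v k = a; revert a; decide
      rcases this with h | h
      · exact absurd h hk
      · rw [h]
  · intro t ht
    ext k
    simp only [Finset.mem_filter, Finset.mem_univ, true_and]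
    by_cases hk : k ∈ t <;> simp [hk]

lemma row_avoid (n Δ : ℕ) (j : Fin n) :
    ∑ v : Fin n → ZMod 2, rowProb n Δ v * (if v j = 0 then 1 else 0)
      = ((n - 1).choose Δ : ℝ) / (n.choose Δ : ℝ) := by
  classical
  have hpt : ∀ v : Fin n → ZMod 2, rowProb n Δ v * (if v j = 0 then 1 else 0)
      = if hammingNorm v = Δ ∧ ∀ k ∉ Finset.univ.erase j, v k = 0
        then 1 / (n.choose Δ : ℝ) else 0 := by
    intro v
    have hiff : (∀ k ∉ Finset.univ.erase j, v k = 0) ↔ v j = 0 := by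
      constructor
      · intro h; exact h j (Finset.notMem_erase j _)
      · intro h k hk
        have : k = j := by
          by_contra hkj
          exact hk (Finset.mem_erase.mpr ⟨hkj, Finset.mem_univ k⟩)
        rw [this]; exact h
    rw [rowProb]
    by_cases h1 : hammingNorm v = Δ <;> by_cases h2 : v j = 0 <;>
      simp [h1, h2, hiff]
  rw [Finset.sum_congr rfl fun v _ => hpt v, Finset.sum_ite, Finset.sum_const,
    Finset.sum_const, card_wt]
  have : (Finset.univ.erase j).card = n - 1 := by
    rw [Finset.card_erase_of_mem (Finset.mem_univ j)]; simp
  rw [this]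
  simp [div_eq_mul_inv]

lemma rowProb_nonneg (n Δ : ℕ) (v : Fin n → ZMod 2) : 0 ≤ rowProb n Δ v := by
  rw [rowProb]; split <;> positivity

lemma inner_lb {p : ℝ} (hp0 : 0 < p) (hp2 : p ≤ 1 - p) {n : ℕ} (j : Fin n)
    (b : (Fin n → ZMod 2) → ZMod 2)
    (hb : ∀ x, b (Function.update x j (x j + 1)) = b x) :
    p ≤ ∑ x : Fin n → ZMod 2, vecProb p x * (if b x ≠ x j then 1 else 0) := by
  classical
  have hp1 : p ≤ 1 := by linarith
  set e : (Fin n → ZMod 2) → (Fin n → ZMod 2) :=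
    fun x => Function.update x j (x j + 1) with he_def
  have he : Function.Involutive e := by
    intro x
    funext k
    by_cases hk : k = j
    · subst hk
      simp only [e, Function.update_self]
      have : ∀ a : ZMod 2, a + 1 + 1 = a := by decide
      rw [this]
    · simp [e, Function.update_of_ne hk]
  have hej : ∀ x, e x j = x j + 1 := fun x => Function.update_self j _ x
  have hne : ∀ a : ZMod 2, a + 1 ≠ a := by decide
  have key : ∀ x, p * (vecProb p x + vecProb p (e x)) ≤ vecProb p x := by
    intro x
    rw [vecProb_eq_prod, vecProb_eq_prod]
    rw [← Finset.prod_erase_mul _ _ (Finset.mem_univ j),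
        ← Finset.prod_erase_mul _ _ (Finset.mem_univ j)]
    have hR : (∏ k ∈ Finset.univ.erase j, (if e x k = 0 then 1 - p else p))
        = ∏ k ∈ Finset.univ.erase j, (if x k = 0 then 1 - p else p) := by
      apply Finset.prod_congr rfl
      intro k hk
      have hkj : k ≠ j := (Finset.mem_erase.mp hk).1
      rw [show e x k = x k from Function.update_of_ne hkj _ x]
    rw [hR, hej]
    set R := ∏ k ∈ Finset.univ.erase j, (if x k = 0 then 1 - p else p) with hRdef
    have hR0 : 0 ≤ R := Finset.prod_nonneg fun k _ => by split <;> linarith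
    have hsum1 : (if x j = 0 then 1 - p else p) + (if x j + 1 = 0 then 1 - p else p) = 1 := by
      have hxj : x j = 0 ∨ x j = 1 := by generalize x j = a; revert a; decide
      rcases hxj with h | h <;> rw [h]
      · norm_num [show (0:ZMod 2) + 1 = 1 from rfl, show (1:ZMod 2) ≠ 0 from by decide]
      · rw [show (1:ZMod 2) + 1 = 0 from by decide, if_pos rfl,
          if_neg (by decide : ¬ (1:ZMod 2) = 0)]; ring
    have hfp : p ≤ (if x j = 0 then 1 - p else p) := by split <;> linarith
    have hx : R * (if x j = 0 then 1 - p else p) + R * (if x j + 1 = 0 then 1 - p else p)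
        = R := by rw [← mul_add, hsum1, mul_one]
    calc p * (R * (if x j = 0 then 1 - p else p) + R * (if x j + 1 = 0 then 1 - p else p))
        = p * R := by rw [hx]
      _ ≤ (if x j = 0 then 1 - p else p) * R := mul_le_mul_of_nonneg_right hfp hR0
      _ = R * (if x j = 0 then 1 - p else p) := mul_comm _ _
  have key2 : ∀ x, p * (vecProb p x + vecProb p (e x)) ≤ vecProb p (e x) := by
    intro x
    have := key (e x)
    rwa [he x, add_comm] at this
  set F : (Fin n → ZMod 2) → ℝ := fun x => vecProb p x * (if b x ≠ x j then 1 else 0) with hF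
  have hpt : ∀ x, p * (vecProb p x + vecProb p (e x)) ≤ F x + F (e x) := by
    intro x
    by_cases hcase : b x = x j
    · have h1 : F x = 0 := by simp [F, hcase]
      have h2 : F (e x) = vecProb p (e x) := by
        have : b (e x) ≠ e x j := by
          rw [hb x, hej, hcase]
          exact fun h => hne (x j) h.symm
        simp [F, this]
      rw [h1, h2, zero_add]
      exact key2 x
    · have h1 : F x = vecProb p x := by simp [F, hcase]
      have h2 : 0 ≤ F (e x) := by
        apply mul_nonneg (vecProb_nonneg (le_of_lt hp0) hp1 _)
        split <;> norm_num
      calc p * (vecProb p x + vecProb p (e x)) ≤ vecProb p x := key x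
        _ ≤ F x + F (e x) := by rw [h1]; linarith
  have hsumFe : ∑ x : Fin n → ZMod 2, F (e x) = ∑ x : Fin n → ZMod 2, F x :=
    Equiv.sum_comp he.toPerm F
  have hsumve : ∑ x : Fin n → ZMod 2, vecProb p (e x) = 1 := by
    rw [← sum_vecProb p n]
    exact Equiv.sum_comp he.toPerm (vecProb p)
  have htot := Finset.sum_le_sum (fun x (_ : x ∈ Finset.univ) => hpt x)
  have h1 : ∑ x : Fin n → ZMod 2, (F x + F (e x)) = 2 * ∑ x : Fin n → ZMod 2, F x := by
    rw [Finset.sum_add_distrib, hsumFe]; ring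
  have h2 : ∑ x : Fin n → ZMod 2, p * (vecProb p x + vecProb p (e x)) = 2 * p := by
    rw [← Finset.mul_sum, Finset.sum_add_distrib, sum_vecProb, hsumve]; ring
  rw [h1, h2] at htot
  linarith

lemma step {p : ℝ} (hp0 : 0 < p) (hp2 : p ≤ 1 - p) (Δ n mm : ℕ) (hn : 0 < n)
    (D : (Fin mm → Fin n → ZMod 2) → (Fin mm → ZMod 2) → Fin n → ZMod 2) :
    p * (((n - 1).choose Δ : ℝ) / (n.choose Δ : ℝ)) ^ mm ≤
      ∑ x : Fin n → ZMod 2, ∑ q : Fin mm → Fin n → ZMod 2,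
        (vecProb p x * ∏ i, rowProb n Δ (q i)) *
          (if D q (fun i => ∑ j, q i j * x j) ≠ x then 1 else 0) := by
  classical
  have hp1 : p ≤ 1 := by linarith
  set j : Fin n := ⟨0, hn⟩ with hj
  set g : (Fin n → ZMod 2) → (Fin mm → Fin n → ZMod 2) → ℝ := fun x q =>
    (∏ i, rowProb n Δ (q i) * (if q i j = 0 then 1 else 0)) *
      (vecProb p x * (if D q (fun i => ∑ k, q i k * x k) j ≠ x j then 1 else 0)) with hg
  have hpt : ∀ x q, g x q ≤
      (vecProb p x * ∏ i, rowProb n Δ (q i)) *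
        (if D q (fun i => ∑ k, q i k * x k) ≠ x then 1 else 0) := by
    intro x q
    by_cases hav : ∀ i, q i j = 0
    · have hprod : (∏ i, rowProb n Δ (q i) * (if q i j = 0 then 1 else 0))
          = ∏ i, rowProb n Δ (q i) := by
        apply Finset.prod_congr rfl
        intro i _
        rw [if_pos (hav i), mul_one]
      simp only [hg]
      rw [hprod]
      have hind : (if D q (fun i => ∑ k, q i k * x k) j ≠ x j then (1:ℝ) else 0)
          ≤ (if D q (fun i => ∑ k, q i k * x k) ≠ x then 1 else 0) := by
        by_cases h : D q (fun i => ∑ k, q i k * x k) j ≠ x j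
        · rw [if_pos h, if_pos (fun hEq => h (congrFun hEq j))]
        · rw [if_neg h]; split <;> norm_num
      have h0 : 0 ≤ ∏ i, rowProb n Δ (q i) :=
        Finset.prod_nonneg fun i _ => rowProb_nonneg n Δ (q i)
      have h0' : 0 ≤ vecProb p x := vecProb_nonneg hp0.le hp1 x
      calc (∏ i, rowProb n Δ (q i)) *
            (vecProb p x * (if D q (fun i => ∑ k, q i k * x k) j ≠ x j then 1 else 0))
          ≤ (∏ i, rowProb n Δ (q i)) *
            (vecProb p x * (if D q (fun i => ∑ k, q i k * x k) ≠ x then 1 else 0)) := by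
            apply mul_le_mul_of_nonneg_left _ h0
            exact mul_le_mul_of_nonneg_left hind h0'
        _ = (vecProb p x * ∏ i, rowProb n Δ (q i)) *
            (if D q (fun i => ∑ k, q i k * x k) ≠ x then 1 else 0) := by ring
    · push_neg at hav
      obtain ⟨i0, hi0⟩ := hav
      have : (∏ i, rowProb n Δ (q i) * (if q i j = 0 then 1 else 0)) = 0 :=
        Finset.prod_eq_zero (Finset.mem_univ i0) (by rw [if_neg hi0, mul_zero])
      simp only [hg]
      rw [this, zero_mul]
      apply mul_nonneg (mul_nonneg (vecProb_nonneg hp0.le hp1 x)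
        (Finset.prod_nonneg fun i _ => rowProb_nonneg n Δ (q i)))
      split <;> norm_num
  have hinner : ∀ q : Fin mm → Fin n → ZMod 2,
      (∏ i, rowProb n Δ (q i) * (if q i j = 0 then 1 else 0)) * p
        ≤ ∑ x : Fin n → ZMod 2, g x q := by
    intro q
    by_cases hav : ∀ i, q i j = 0
    · simp only [hg]
      rw [← Finset.mul_sum]
      apply mul_le_mul_of_nonneg_left _
        (Finset.prod_nonneg fun i _ => mul_nonneg (rowProb_nonneg n Δ (q i)) (by split <;> norm_num))
      apply inner_lb hp0 hp2 j
      intro x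
      have : (fun i => ∑ k, q i k * (Function.update x j (x j + 1)) k)
          = fun i => ∑ k, q i k * x k := by
        funext i
        apply Finset.sum_congr rfl
        intro k _
        by_cases hk : k = j
        · subst hk; rw [hav i, zero_mul, zero_mul]
        · rw [Function.update_of_ne hk]
      rw [this]
    · push_neg at hav
      obtain ⟨i0, hi0⟩ := hav
      have hz : (∏ i, rowProb n Δ (q i) * (if q i j = 0 then 1 else 0)) = 0 :=
        Finset.prod_eq_zero (Finset.mem_univ i0) (by rw [if_neg hi0, mul_zero])
      rw [hz, zero_mul]
      apply Finset.sum_nonneg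
      intro x _
      simp only [hg]
      rw [hz, zero_mul]
  have hfact : ∑ q : Fin mm → Fin n → ZMod 2,
      (∏ i, rowProb n Δ (q i) * (if q i j = 0 then 1 else 0))
      = (((n - 1).choose Δ : ℝ) / (n.choose Δ : ℝ)) ^ mm := by
    rw [← row_avoid n Δ j, Fintype.sum_pow (fun v => rowProb n Δ v * (if v j = 0 then 1 else 0)) mm]
  calc p * (((n - 1).choose Δ : ℝ) / (n.choose Δ : ℝ)) ^ mm
      = ∑ q : Fin mm → Fin n → ZMod 2,
          (∏ i, rowProb n Δ (q i) * (if q i j = 0 then 1 else 0)) * p := by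
        rw [← Finset.sum_mul, hfact]; ring
    _ ≤ ∑ q : Fin mm → Fin n → ZMod 2, ∑ x : Fin n → ZMod 2, g x q :=
        Finset.sum_le_sum fun q _ => hinner q
    _ = ∑ x : Fin n → ZMod 2, ∑ q : Fin mm → Fin n → ZMod 2, g x q := Finset.sum_comm
    _ ≤ _ := Finset.sum_le_sum fun x _ => Finset.sum_le_sum fun q _ => hpt x q

lemma choose_ratio {n Δ : ℕ} (hn : Δ < n) :
    ((n - 1).choose Δ : ℝ) / (n.choose Δ : ℝ) = ((n : ℝ) - Δ) / n := by
  have hnat : n * (n - 1).choose Δ = n.choose Δ * (n - Δ) := by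
    obtain ⟨n', rfl⟩ : ∃ n', n = n' + 1 := ⟨n - 1, by omega⟩
    simp only [Nat.add_sub_cancel]
    rw [show n' + 1 = Nat.succ n' from rfl, Nat.add_one_mul_choose_eq n' Δ]
    rw [show Nat.succ n' = n' + 1 from rfl, Nat.choose_succ_right_eq]
  have hnpos : 0 < n := lt_of_le_of_lt (Nat.zero_le Δ) hn
  have hc0 : (n.choose Δ : ℝ) ≠ 0 := Nat.cast_ne_zero.mpr (Nat.choose_pos hn.le).ne'
  have hn0 : (n : ℝ) ≠ 0 := Nat.cast_ne_zero.mpr hnpos.ne'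
  rw [div_eq_div_iff hc0 hn0]
  have hcast : ((n : ℝ) - Δ) = ((n - Δ : ℕ) : ℝ) := by
    rw [Nat.cast_sub (le_of_lt hn)]
  rw [hcast]
  have := congrArg (Nat.cast : ℕ → ℝ) hnat
  push_cast at this
  linarith

lemma limit_part (Δ : ℕ) (c : ℝ) (m : ℕ → ℕ)
    (hm : Filter.Tendsto (fun n => (m n : ℝ) / n) Filter.atTop (nhds c)) :
    Filter.Tendsto (fun n : ℕ => (((n : ℝ) - Δ) / n) ^ (m n)) Filter.atTop
      (nhds (Real.exp (-(Δ * c)))) := by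
  have h1 : Filter.Tendsto (fun n : ℕ => (n : ℝ) * Real.log (1 + (-(Δ:ℝ)) / n))
      Filter.atTop (nhds (-(Δ:ℝ))) :=
    (Real.tendsto_mul_log_one_add_div_atTop (-(Δ:ℝ))).comp tendsto_natCast_atTop_atTop
  have h2 : Filter.Tendsto (fun n : ℕ => ((m n : ℝ) / n) * ((n : ℝ) * Real.log (1 + (-(Δ:ℝ)) / n)))
      Filter.atTop (nhds (c * (-(Δ:ℝ)))) := hm.mul h1
  have h3 : Filter.Tendsto
      (fun n : ℕ => Real.exp (((m n : ℝ) / n) * ((n : ℝ) * Real.log (1 + (-(Δ:ℝ)) / n))))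
      Filter.atTop (nhds (Real.exp (c * (-(Δ:ℝ))))) :=
    (Real.continuous_exp.tendsto _).comp h2
  have hEq : Real.exp (c * (-(Δ:ℝ))) = Real.exp (-(Δ * c)) := by ring_nf
  rw [hEq] at h3
  apply h3.congr'
  filter_upwards [Filter.eventually_ge_atTop (Δ + 1)] with n hn
  have hnn : 0 < n := by omega
  have hn0 : (0:ℝ) < n := by exact_mod_cast hnn
  have hΔn : (Δ:ℝ) < n := by exact_mod_cast hn
  have hbase : 1 + (-(Δ:ℝ)) / n = ((n:ℝ) - Δ) / n := by field_simp; ring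
  have hpos : (0:ℝ) < ((n:ℝ) - Δ) / n := by
    apply div_pos <;> linarith
  rw [hbase]
  have harg : ((m n : ℝ) / n) * ((n : ℝ) * Real.log (((n:ℝ) - Δ) / n))
      = (m n : ℝ) * Real.log (((n:ℝ) - Δ) / n) := by
    field_simp
  rw [harg, Real.exp_nat_mul, Real.exp_log hpos]

/-- The average probability of error of the uniformly random weight-`Δ` XOR query ensemble
with `m(n) ≈ c·n` queries is bounded away from `0`: its liminf is at least `p·exp(−Δc) > 0`,
for every sequence of decoders. -/
theorem stmt0 (p : ℝ) (hp : p ∈ Set.Ioo (0 : ℝ) (1/2)) (Δ : ℕ) (hΔ : 1 ≤ Δ)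
    (α c : ℝ)
    (hα : α = (1 + (1 - 4 * p * (1 - p)) ^ Δ) / 2)
    (hc : c = Hb p / Real.logb 2 (1 / α))
    (m : ℕ → ℕ)
    (hm : Filter.Tendsto (fun n => (m n : ℝ) / n) Filter.atTop (nhds c))
    (D : ∀ n : ℕ, (Fin (m n) → Fin n → ZMod 2) → (Fin (m n) → ZMod 2) → (Fin n → ZMod 2)) :
    p * Real.exp (-(Δ * c)) ≤
      Filter.liminf (fun n =>
        ∑ x : Fin n → ZMod 2, ∑ q : Fin (m n) → Fin n → ZMod 2,
          (vecProb p x * ∏ i, rowProb n Δ (q i)) *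
            (if D n q (fun i => ∑ j, q i j * x j) ≠ x then 1 else 0)) Filter.atTop
    ∧ 0 < p * Real.exp (-(Δ * c)) := by
  obtain ⟨hp0, hp12⟩ := hp
  have hp2 : p ≤ 1 - p := by linarith
  have hp1 : p ≤ 1 := by linarith
  constructor
  · set E : ℕ → ℝ := fun n =>
      ∑ x : Fin n → ZMod 2, ∑ q : Fin (m n) → Fin n → ZMod 2,
        (vecProb p x * ∏ i, rowProb n Δ (q i)) *
          (if D n q (fun i => ∑ j, q i j * x j) ≠ x then 1 else 0) with hE
    have hE0 : ∀ n, 0 ≤ E n := by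
      intro n
      apply Finset.sum_nonneg
      intro x _
      apply Finset.sum_nonneg
      intro q _
      apply mul_nonneg (mul_nonneg (vecProb_nonneg hp0.le hp1 x)
        (Finset.prod_nonneg fun i _ => rowProb_nonneg n Δ (q i)))
      split <;> norm_num
    have hrow_le : ∀ n : ℕ, ∑ v : Fin n → ZMod 2, rowProb n Δ v ≤ 1 := by
      intro n
      have hcard : (Finset.univ.filter fun v : Fin n → ZMod 2 => hammingNorm v = Δ).card
          = n.choose Δ := by
        have h := card_wt n Δ Finset.univ
        rw [Finset.card_univ, Fintype.card_fin] at h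
        rw [← h]
        congr 1
        apply Finset.filter_congr
        intro v _
        simp
      simp only [rowProb]
      rw [← Finset.sum_filter, Finset.sum_const, hcard]
      rcases Nat.eq_zero_or_pos (n.choose Δ) with hch | hch
      · simp [hch]
      · rw [nsmul_eq_mul, mul_one_div, div_self (by positivity : (n.choose Δ : ℝ) ≠ 0)]
    have hE1 : ∀ n, E n ≤ 1 := by
      intro n
      have hterm : ∀ (x : Fin n → ZMod 2) (q : Fin (m n) → Fin n → ZMod 2),
          (vecProb p x * ∏ i, rowProb n Δ (q i)) *
            (if D n q (fun i => ∑ j, q i j * x j) ≠ x then (1:ℝ) else 0)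
          ≤ vecProb p x * ∏ i, rowProb n Δ (q i) := by
        intro x q
        have h0 : 0 ≤ vecProb p x * ∏ i, rowProb n Δ (q i) :=
          mul_nonneg (vecProb_nonneg hp0.le hp1 x)
            (Finset.prod_nonneg fun i _ => rowProb_nonneg n Δ (q i))
        split
        · rw [mul_one]
        · rw [mul_zero]; exact h0
      calc E n ≤ ∑ x : Fin n → ZMod 2, ∑ q : Fin (m n) → Fin n → ZMod 2,
            vecProb p x * ∏ i, rowProb n Δ (q i) :=
            Finset.sum_le_sum fun x _ => Finset.sum_le_sum fun q _ => hterm x q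
        _ = (∑ x : Fin n → ZMod 2, vecProb p x) *
            (∑ q : Fin (m n) → Fin n → ZMod 2, ∏ i, rowProb n Δ (q i)) := by
            rw [Finset.sum_mul_sum]
        _ = (∑ v : Fin n → ZMod 2, rowProb n Δ v) ^ (m n) := by
            rw [sum_vecProb, one_mul, Fintype.sum_pow]
        _ ≤ 1 := pow_le_one₀ (Finset.sum_nonneg fun v _ => rowProb_nonneg n Δ v) (hrow_le n)
    set G : ℕ → ℝ := fun n => p * (((n : ℝ) - Δ) / n) ^ (m n) with hG
    have hGlim : Filter.Tendsto G Filter.atTop (nhds (p * Real.exp (-(Δ * c)))) :=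
      (limit_part Δ c m hm).const_mul p
    have hev : ∀ᶠ n in Filter.atTop, G n ≤ E n := by
      filter_upwards [Filter.eventually_ge_atTop (Δ + 1)] with n hn
      have hΔn : Δ < n := by omega
      have hnpos : 0 < n := by omega
      have hstep := step hp0 hp2 Δ n (m n) hnpos (D n)
      rw [choose_ratio hΔn] at hstep
      exact hstep
    have hbd : Filter.IsBoundedUnder (· ≥ ·) Filter.atTop G :=
      hGlim.isBoundedUnder_ge
    have hco : Filter.IsCoboundedUnder (· ≥ ·) Filter.atTop E :=
      Filter.isCoboundedUnder_ge_of_le Filter.atTop hE1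
    calc p * Real.exp (-(Δ * c)) = Filter.liminf G Filter.atTop := hGlim.liminf_eq.symm
      _ ≤ Filter.liminf E Filter.atTop := Filter.liminf_le_liminf hev hbd hco
  · exact mul_pos hp0 (Real.exp_pos _)
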